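/- Define, for r ∈ (−2π, 2π) with r ≠ 0: μ(r) = (2 − 2cos r − r sin r)/r⁴, η(r) = r²(1 − cos r)/(2(r² − 2r sin r − 2cos r + 2)), and γ(r) = r²/(2√(r² − 2r sin r − 2cos r + 2)). Then all three functions extend continuously to [−2π, 2π], the integrals below are finite, and ∫_{−2π}^{2π} γ(r) η(r) μ(r) dr < ∫_{−2π}^{2π} γ(r) μ(r) dr, the right-hand integral being strictly positive. -/

import Mathlib

open MeasureTheory Real

noncomputable section

open Filter Topology Set


def sDD (r : ℝ) : ℝ := r ^ 2 - 2 * r * Real.sin r - 2 * Real.cos r + 2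
def sNN (r : ℝ) : ℝ := 2 - 2 * Real.cos r - r * Real.sin r

lemma s_cos_half (r : ℝ) : Real.cos r = 1 - 2 * Real.sin (r / 2) ^ 2 := by
  have h := Real.cos_two_mul (r / 2)
  have h2 := Real.sin_sq_add_cos_sq (r / 2)
  rw [show 2 * (r / 2) = r by ring] at h
  nlinarith [h, h2]

lemma s_sin_half (r : ℝ) : Real.sin r = 2 * Real.sin (r / 2) * Real.cos (r / 2) := by
  have h := Real.sin_two_mul (r / 2)
  rw [show 2 * (r / 2) = r by ring] at h
  linarith

lemma sDD_eq (r : ℝ) :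
    sDD r = (r - Real.sin r) ^ 2 + 4 * Real.sin (r / 2) ^ 4 := by
  have h2 := Real.sin_sq_add_cos_sq (r / 2)
  rw [sDD, s_cos_half r]
  rw [s_sin_half r]
  nlinarith [h2]

lemma sEE_eq (r : ℝ) :
    2 * sDD r - r ^ 2 * (1 - Real.cos r) =
      8 * ((r / 2) * Real.cos (r / 2) - Real.sin (r / 2)) ^ 2 := by
  have h2 := Real.sin_sq_add_cos_sq (r / 2)
  rw [sDD, s_cos_half r, s_sin_half r]
  nlinarith [h2]

lemma sNN_eq (r : ℝ) :
    sNN r = 4 * Real.sin (r / 2) * (Real.sin (r / 2) - (r / 2) * Real.cos (r / 2)) := by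
  rw [sNN, s_cos_half r, s_sin_half r]; ring

lemma s_sin_ne (r : ℝ) (hr : r ≠ 0) : r - Real.sin r ≠ 0 := by
  rcases lt_or_gt_of_ne hr with h | h
  · have := Real.sin_lt (x := -r) (by linarith)
    rw [Real.sin_neg] at this
    intro hc; linarith
  · have := Real.sin_lt h
    intro hc; linarith

lemma sDD_pos (r : ℝ) (hr : r ≠ 0) : 0 < sDD r := by
  rw [sDD_eq]
  have h0 : r - Real.sin r ≠ 0 := s_sin_ne r hr
  have h1 : 0 < (r - Real.sin r) ^ 2 := by positivity
  nlinarith [pow_nonneg (abs_nonneg (Real.sin (r/2))) 4, sq_nonneg (Real.sin (r/2) ^ 2)]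

lemma sDD_nonneg (r : ℝ) : 0 ≤ sDD r := by rw [sDD_eq]; positivity
lemma s_lim_sin : Tendsto (fun r : ℝ => Real.sin r / r) (𝓝[≠] 0) (𝓝 1) := by
  have h := (Real.hasDerivAt_sin 0)
  rw [hasDerivAt_iff_tendsto_slope] at h
  simp only [Real.cos_zero] at h
  refine h.congr fun x => by simp [slope_def_field]

lemma s_ev_ne : ∀ᶠ x : ℝ in 𝓝[≠] (0:ℝ), x ≠ 0 :=
  eventually_mem_nhdsWithin.mono fun x hx => hx

lemma s_lim_cos : Tendsto (fun r : ℝ => (1 - Real.cos r) / r ^ 2) (𝓝[≠] 0) (𝓝 (1/2)) := by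
  apply HasDerivAt.lhopital_zero_nhdsNE (f' := fun x => Real.sin x) (g' := fun x => 2 * x)
  · filter_upwards with x
    exact ((hasDerivAt_const x (1:ℝ)).sub (Real.hasDerivAt_cos x)).congr_deriv (by simp)
  · filter_upwards with x
    simpa using hasDerivAt_pow 2 x
  · filter_upwards [s_ev_ne] with x hx
    simpa using hx
  · have : Tendsto (fun r : ℝ => 1 - Real.cos r) (𝓝 0) (𝓝 (1 - Real.cos 0)) :=
      (continuous_const.sub Real.continuous_cos).tendsto 0
    simpa using this.mono_left nhdsWithin_le_nhds
  · have : Tendsto (fun r : ℝ => r ^ 2) (𝓝 0) (𝓝 (0 ^ 2)) := (continuous_pow 2).tendsto 0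
    simpa using this.mono_left nhdsWithin_le_nhds
  · exact (s_lim_sin.div_const 2).congr fun x => by rw [div_div, mul_comm]

lemma s_hd_N (x : ℝ) : HasDerivAt (fun r : ℝ => 2 - 2 * Real.cos r - r * Real.sin r)
    (Real.sin x - x * Real.cos x) x := by
  have h := ((hasDerivAt_const x (2:ℝ)).sub ((Real.hasDerivAt_cos x).const_mul 2)).sub
    ((hasDerivAt_id x).mul (Real.hasDerivAt_sin x))
  refine h.congr_deriv ?_
  simp; try ring

lemma s_hd_N2 (x : ℝ) : HasDerivAt (fun r : ℝ => Real.sin r - r * Real.cos r)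
    (x * Real.sin x) x := by
  have h := (Real.hasDerivAt_sin x).sub ((hasDerivAt_id x).mul (Real.hasDerivAt_cos x))
  refine h.congr_deriv ?_
  simp; try ring

lemma s_hd_D (x : ℝ) : HasDerivAt (fun r : ℝ => r ^ 2 - 2 * r * Real.sin r - 2 * Real.cos r + 2)
    (2 * x - 2 * x * Real.cos x) x := by
  have h := (((hasDerivAt_pow 2 x).sub (((hasDerivAt_id x).const_mul 2).mul
    (Real.hasDerivAt_sin x))).sub ((Real.hasDerivAt_cos x).const_mul 2)).add_const 2
  refine h.congr_deriv ?_
  simp; try ring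

lemma s_hd_pow4 (x : ℝ) : HasDerivAt (fun r : ℝ => r ^ 4) (4 * x ^ 3) x := by
  simpa using hasDerivAt_pow 4 x

lemma s_lim_N2 : Tendsto (fun r : ℝ => (Real.sin r - r * Real.cos r) / (4 * r ^ 3))
    (𝓝[≠] 0) (𝓝 (1/12)) := by
  apply HasDerivAt.lhopital_zero_nhdsNE (f' := fun x => x * Real.sin x)
    (g' := fun x => 12 * x ^ 2)
  · filter_upwards with x using s_hd_N2 x
  · filter_upwards with x
    have h := (hasDerivAt_pow 3 x).const_mul (4:ℝ)
    refine h.congr_deriv ?_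
    simp; try ring
  · filter_upwards [s_ev_ne] with x hx
    positivity
  · have : Tendsto (fun r : ℝ => Real.sin r - r * Real.cos r) (𝓝 0)
        (𝓝 (Real.sin 0 - 0 * Real.cos 0)) :=
      (Real.continuous_sin.sub (continuous_id.mul Real.continuous_cos)).tendsto 0
    simpa using this.mono_left nhdsWithin_le_nhds
  · have : Tendsto (fun r : ℝ => 4 * r ^ 3) (𝓝 0) (𝓝 (4 * 0 ^ 3)) :=
      (continuous_const.mul (continuous_pow 3)).tendsto 0
    simpa using this.mono_left nhdsWithin_le_nhds
  · have h := s_lim_sin.div_const 12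
    refine (h.congr' ?_)
    filter_upwards [s_ev_ne] with x hx
    field_simp

lemma s_lim_N : Tendsto (fun r : ℝ => sNN r / r ^ 4) (𝓝[≠] 0) (𝓝 (1/12)) := by
  apply HasDerivAt.lhopital_zero_nhdsNE (f' := fun x => Real.sin x - x * Real.cos x)
    (g' := fun x => 4 * x ^ 3)
  · filter_upwards with x using s_hd_N x
  · filter_upwards with x using s_hd_pow4 x
  · filter_upwards [s_ev_ne] with x hx
    positivity
  · have : Tendsto sNN (𝓝 0) (𝓝 (sNN 0)) := by
      apply Continuous.tendsto
      unfold sNN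
      continuity
    have h0 : sNN 0 = 0 := by simp [sNN]
    rw [h0] at this
    exact this.mono_left nhdsWithin_le_nhds
  · have : Tendsto (fun r : ℝ => r ^ 4) (𝓝 0) (𝓝 ((0:ℝ) ^ 4)) := (continuous_pow 4).tendsto 0
    simpa using this.mono_left nhdsWithin_le_nhds
  · exact s_lim_N2

lemma s_lim_D : Tendsto (fun r : ℝ => sDD r / r ^ 4) (𝓝[≠] 0) (𝓝 (1/4)) := by
  apply HasDerivAt.lhopital_zero_nhdsNE (f' := fun x => 2 * x - 2 * x * Real.cos x)
    (g' := fun x => 4 * x ^ 3)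
  · filter_upwards with x using s_hd_D x
  · filter_upwards with x using s_hd_pow4 x
  · filter_upwards [s_ev_ne] with x hx
    positivity
  · have : Tendsto sDD (𝓝 0) (𝓝 (sDD 0)) := by
      apply Continuous.tendsto
      unfold sDD
      continuity
    have h0 : sDD 0 = 0 := by simp [sDD]
    rw [h0] at this
    exact this.mono_left nhdsWithin_le_nhds
  · have : Tendsto (fun r : ℝ => r ^ 4) (𝓝 0) (𝓝 ((0:ℝ) ^ 4)) := (continuous_pow 4).tendsto 0
    simpa using this.mono_left nhdsWithin_le_nhds
  · have h := s_lim_cos.div_const 2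
    rw [show (1:ℝ)/2/2 = 1/4 by norm_num] at h
    refine h.congr' ?_
    filter_upwards [s_ev_ne] with x hx
    field_simp
    ring

def sMU (r : ℝ) : ℝ := if r = 0 then 1/12 else sNN r / r ^ 4
def sETA (r : ℝ) : ℝ := if r = 0 then 1 else r ^ 2 * (1 - Real.cos r) / (2 * sDD r)
def sGA (r : ℝ) : ℝ := if r = 0 then 1 else r ^ 2 / (2 * Real.sqrt (sDD r))

lemma s_tendsto_of (f : ℝ → ℝ) (l : ℝ) (h : Tendsto f (𝓝[≠] 0) (𝓝 l)) (h0 : f 0 = l) :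
    ContinuousAt f 0 := by
  unfold ContinuousAt
  rw [h0, ← nhdsNE_sup_pure, tendsto_sup]
  exact ⟨h, by simpa [h0] using tendsto_pure_nhds f 0⟩

lemma s_cont_sDD : Continuous sDD := by unfold sDD; continuity
lemma s_cont_sNN : Continuous sNN := by unfold sNN; continuity

lemma s_cont_mu : Continuous sMU := by
  rw [continuous_iff_continuousAt]
  intro x
  by_cases hx : x = 0
  · subst hx
    apply s_tendsto_of _ (1/12)
    · refine s_lim_N.congr' ?_
      filter_upwards [s_ev_ne] with r hr
      simp [sMU, hr]
    · simp [sMU]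
  · have hev : (fun r => sNN r / r ^ 4) =ᶠ[𝓝 x] sMU := by
      filter_upwards [eventually_ne_nhds hx] with r hr
      simp [sMU, hr]
    refine ContinuousAt.congr ?_ hev
    exact (s_cont_sNN.continuousAt).div ((continuous_pow 4).continuousAt) (pow_ne_zero 4 hx)

lemma s_cont_eta : Continuous sETA := by
  rw [continuous_iff_continuousAt]
  intro x
  by_cases hx : x = 0
  · subst hx
    apply s_tendsto_of _ 1
    · have h := s_lim_cos.div ((s_lim_D.const_mul 2)) (by norm_num)
      rw [show (1:ℝ)/2 / (2 * (1/4)) = 1 by norm_num] at h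
      refine h.congr' ?_
      filter_upwards [s_ev_ne] with r hr
      have hD : sDD r ≠ 0 := (sDD_pos r hr).ne'
      simp only [sETA, if_neg hr, Pi.div_apply]
      field_simp
    · simp [sETA]
  · have hev : (fun r => r ^ 2 * (1 - Real.cos r) / (2 * sDD r)) =ᶠ[𝓝 x] sETA := by
      filter_upwards [eventually_ne_nhds hx] with r hr
      simp [sETA, hr]
    refine ContinuousAt.congr ?_ hev
    refine ContinuousAt.div (by fun_prop) (continuous_const.mul s_cont_sDD).continuousAt ?_
    exact (mul_pos two_pos (sDD_pos x hx)).ne'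

lemma s_cont_ga : Continuous sGA := by
  rw [continuous_iff_continuousAt]
  intro x
  by_cases hx : x = 0
  · subst hx
    apply s_tendsto_of _ 1
    · have hsq : Tendsto (fun r => Real.sqrt (sDD r / r ^ 4)) (𝓝[≠] (0:ℝ))
          (𝓝 (Real.sqrt (1/4))) := (Real.continuous_sqrt.continuousAt.tendsto).comp s_lim_D
      rw [show Real.sqrt (1/4) = 1/2 by
        rw [show (1/4:ℝ) = (1/2)^2 by norm_num, Real.sqrt_sq (by norm_num)]] at hsq
      have h : Tendsto (fun r => 1 / (2 * Real.sqrt (sDD r / r ^ 4))) (𝓝[≠] (0:ℝ))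
          (𝓝 (1 / (2 * (1/2)))) :=
        tendsto_const_nhds.div (hsq.const_mul 2) (by norm_num)
      rw [show (1:ℝ) / (2 * (1/2)) = 1 by norm_num] at h
      refine h.congr' ?_
      filter_upwards [s_ev_ne] with r hr
      have h4 : Real.sqrt (sDD r / r ^ 4) = Real.sqrt (sDD r) / r ^ 2 := by
        rw [Real.sqrt_div (sDD_nonneg r), show (r:ℝ) ^ 4 = (r ^ 2) ^ 2 by ring,
          Real.sqrt_sq (sq_nonneg r)]
      have hsp : 0 < Real.sqrt (sDD r) := Real.sqrt_pos.mpr (sDD_pos r hr)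
      have hr2 : (r:ℝ) ^ 2 ≠ 0 := pow_ne_zero 2 hr
      simp only [sGA, if_neg hr, h4]
      field_simp
    · simp [sGA]
  · have hev : (fun r => r ^ 2 / (2 * Real.sqrt (sDD r))) =ᶠ[𝓝 x] sGA := by
      filter_upwards [eventually_ne_nhds hx] with r hr
      simp [sGA, hr]
    refine ContinuousAt.congr ?_ hev
    refine ContinuousAt.div ((continuous_pow 2).continuousAt)
      (continuous_const.mul (Real.continuous_sqrt.comp s_cont_sDD)).continuousAt ?_
    exact (mul_pos two_pos (Real.sqrt_pos.mpr (sDD_pos x hx))).ne'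

lemma s_NN_nonneg_aux (r : ℝ) (h0 : 0 ≤ r) (h2 : r ≤ 2 * π) : 0 ≤ sNN r := by
  rw [sNN_eq]
  have hs : 0 ≤ Real.sin (r / 2) :=
    Real.sin_nonneg_of_nonneg_of_le_pi (by linarith) (by linarith)
  have key : (r / 2) * Real.cos (r / 2) ≤ Real.sin (r / 2) := by
    by_cases hc : Real.cos (r / 2) ≤ 0
    · have : (r / 2) * Real.cos (r / 2) ≤ 0 := mul_nonpos_of_nonneg_of_nonpos (by linarith) hc
      linarith
    · push_neg at hc
      have hlt : r / 2 < π / 2 := by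
        by_contra hge
        push_neg at hge
        have := Real.cos_nonpos_of_pi_div_two_le_of_le hge (by nlinarith [Real.pi_pos])
        linarith
      rcases eq_or_lt_of_le (show (0:ℝ) ≤ r / 2 by linarith) with he | hpos
      · rw [← he]; simp
      · have ht := Real.lt_tan hpos hlt
        rw [Real.tan_eq_sin_div_cos] at ht
        rw [lt_div_iff₀ hc] at ht
        linarith
  nlinarith

lemma s_NN_even (r : ℝ) : sNN (-r) = sNN r := by
  simp only [sNN, Real.cos_neg, Real.sin_neg]
  ring

lemma s_NN_nonneg (r : ℝ) (h1 : -(2 * π) ≤ r) (h2 : r ≤ 2 * π) : 0 ≤ sNN r := by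
  rcases le_or_gt 0 r with h | h
  · exact s_NN_nonneg_aux r h h2
  · rw [← s_NN_even r]
    exact s_NN_nonneg_aux (-r) (by linarith) (by linarith)

lemma s_mu_nonneg (r : ℝ) (h1 : -(2 * π) ≤ r) (h2 : r ≤ 2 * π) : 0 ≤ sMU r := by
  by_cases hr : r = 0
  · simp [sMU, hr]
  · rw [sMU, if_neg hr]
    exact div_nonneg (s_NN_nonneg r h1 h2) (by positivity)

lemma s_eta_nonneg (r : ℝ) : 0 ≤ sETA r := by
  by_cases hr : r = 0
  · simp [sETA, hr]
  · rw [sETA, if_neg hr]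
    have := Real.cos_le_one r
    have := sDD_pos r hr
    apply div_nonneg <;> nlinarith [sq_nonneg r]

lemma s_eta_le_one (r : ℝ) : sETA r ≤ 1 := by
  by_cases hr : r = 0
  · simp [sETA, hr]
  · rw [sETA, if_neg hr]
    rw [div_le_one (by have := sDD_pos r hr; linarith)]
    nlinarith [sEE_eq r, sq_nonneg (r / 2 * Real.cos (r / 2) - Real.sin (r / 2))]

lemma s_ga_nonneg (r : ℝ) : 0 ≤ sGA r := by
  by_cases hr : r = 0
  · simp [sGA, hr]
  · rw [sGA, if_neg hr]
    have := Real.sqrt_nonneg (sDD r)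
    positivity

lemma s_ga_pi_pos : 0 < sGA π := by
  rw [sGA, if_neg Real.pi_ne_zero]
  have h := Real.sqrt_pos.mpr (sDD_pos π Real.pi_ne_zero)
  have := Real.pi_pos
  positivity

lemma s_mu_pi_pos : 0 < sMU π := by
  rw [sMU, if_neg Real.pi_ne_zero]
  have hN : sNN π = 4 := by norm_num [sNN]
  rw [hN]
  have := Real.pi_pos
  positivity

lemma s_eta_pi_lt : sETA π < 1 := by
  rw [sETA, if_neg Real.pi_ne_zero]
  have hD := sDD_pos π Real.pi_ne_zero
  rw [div_lt_one (by linarith)]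
  have hE := sEE_eq π
  rw [Real.cos_pi_div_two, Real.sin_pi_div_two] at hE
  nlinarith

theorem stmt15 :
    ∃ μ η γ : ℝ → ℝ,
      ContinuousOn μ (Set.Icc (-(2 * π)) (2 * π)) ∧
      ContinuousOn η (Set.Icc (-(2 * π)) (2 * π)) ∧
      ContinuousOn γ (Set.Icc (-(2 * π)) (2 * π)) ∧
      (∀ r ∈ Set.Ioo (-(2 * π)) (2 * π), r ≠ 0 →
        μ r = (2 - 2 * Real.cos r - r * Real.sin r) / r ^ 4) ∧
      (∀ r ∈ Set.Ioo (-(2 * π)) (2 * π), r ≠ 0 →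
        η r = r ^ 2 * (1 - Real.cos r) /
          (2 * (r ^ 2 - 2 * r * Real.sin r - 2 * Real.cos r + 2))) ∧
      (∀ r ∈ Set.Ioo (-(2 * π)) (2 * π), r ≠ 0 →
        γ r = r ^ 2 / (2 * Real.sqrt (r ^ 2 - 2 * r * Real.sin r - 2 * Real.cos r + 2))) ∧
      IntegrableOn (fun r => γ r * η r * μ r) (Set.Icc (-(2 * π)) (2 * π)) volume ∧
      IntegrableOn (fun r => γ r * μ r) (Set.Icc (-(2 * π)) (2 * π)) volume ∧
      0 < ∫ r in Set.Icc (-(2 * π)) (2 * π), γ r * μ r ∧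
      (∫ r in Set.Icc (-(2 * π)) (2 * π), γ r * η r * μ r) <
        ∫ r in Set.Icc (-(2 * π)) (2 * π), γ r * μ r := by
  have hpi := Real.pi_pos
  have h2π : -(2 * π) < 2 * π := by linarith
  refine ⟨sMU, sETA, sGA, s_cont_mu.continuousOn, s_cont_eta.continuousOn,
    s_cont_ga.continuousOn, ?_, ?_, ?_, ?_, ?_, ?_, ?_⟩
  · intro r _ hr; simp [sMU, if_neg hr, sNN]
  · intro r _ hr; simp [sETA, if_neg hr, sDD]
  · intro r _ hr; simp [sGA, if_neg hr, sDD]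
  · exact ((s_cont_ga.mul s_cont_eta).mul s_cont_mu).integrableOn_Icc
  · exact (s_cont_ga.mul s_cont_mu).integrableOn_Icc
  · rw [MeasureTheory.integral_Icc_eq_integral_Ioc, ← intervalIntegral.integral_of_le h2π.le]
    have h := intervalIntegral.integral_lt_integral_of_continuousOn_of_le_of_exists_lt
      (f := fun _ : ℝ => (0:ℝ)) (g := fun r => sGA r * sMU r) h2π continuousOn_const
      ((s_cont_ga.mul s_cont_mu)).continuousOn
      (fun x hx => mul_nonneg (s_ga_nonneg x) (s_mu_nonneg x (le_of_lt hx.1) hx.2))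
      ⟨0, ⟨by linarith, by linarith⟩, by norm_num [sGA, sMU]⟩
    simpa using h
  · rw [MeasureTheory.integral_Icc_eq_integral_Ioc,
      MeasureTheory.integral_Icc_eq_integral_Ioc (f := fun r => sGA r * sMU r),
      ← intervalIntegral.integral_of_le h2π.le, ← intervalIntegral.integral_of_le h2π.le]
    apply intervalIntegral.integral_lt_integral_of_continuousOn_of_le_of_exists_lt h2π
    · exact ((s_cont_ga.mul s_cont_eta).mul s_cont_mu).continuousOn
    · exact (s_cont_ga.mul s_cont_mu).continuousOn
    · intro x hx
      have h1 := s_ga_nonneg x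
      have h2 := s_mu_nonneg x (le_of_lt hx.1) hx.2
      have h3 := s_eta_le_one x
      have h4 := s_eta_nonneg x
      nlinarith [mul_nonneg (mul_nonneg h1 h2) (sub_nonneg.mpr h3)]
    · refine ⟨π, ⟨by linarith, by linarith⟩, ?_⟩
      have h1 := s_ga_pi_pos
      have h2 := s_mu_pi_pos
      have h3 := s_eta_pi_lt
      nlinarith [mul_pos (mul_pos h1 h2) (sub_pos.mpr h3)]
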